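/- Let α be irrational with inf_{q≥1} q·‖qα‖ = 0. Then for every C > 0 there exist N ≥ 1 and x ∈ ℝ such that the points {x + kα : 0 ≤ k ≤ ⌊C·N⌋} are not (1/N)-dense modulo 1. -/

import Mathlib

/-- Distance from a real number to the nearest integer. -/
noncomputable def nint (y : ℝ) : ℝ := |y - round y|

lemma nint_le (y : ℝ) (n : ℤ) : nint y ≤ |y - n| := by
  rcases eq_or_ne n (round y) with h | h
  · simp [nint, h]
  · have h1 : |y - (round y : ℝ)| ≤ 1/2 := abs_sub_round y
    have h2 : (1:ℝ) ≤ |(round y : ℝ) - n| := by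
      have hne : round y - n ≠ 0 := sub_ne_zero.mpr (Ne.symm h)
      have := Int.one_le_abs hne
      calc (1:ℝ) ≤ |((round y - n : ℤ) : ℝ)| := by exact_mod_cast this
        _ = |(round y:ℝ) - n| := by push_cast; ring_nf
    have h3 : |(round y:ℝ) - n| ≤ |(round y:ℝ) - y| + |y - n| := abs_sub_le _ _ _
    have h4 : |(round y:ℝ) - y| = |y - (round y:ℝ)| := abs_sub_comm _ _
    have : (1:ℝ)/2 ≤ |y - n| := by
      rw [h4] at h3; linarith
    unfold nint; linarith

lemma nint_add_ge (a b : ℝ) : nint a - |b| ≤ nint (a + b) := by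
  have h1 : nint a ≤ |a - (round (a+b) : ℝ)| := nint_le a _
  have h2 : |a - (round (a+b) : ℝ)| - |b| ≤ |a + b - (round (a+b) : ℝ)| := by
    have := abs_sub_le a (a + b) (round (a+b) : ℝ)
    have h0 : |a - (a+b)| = |b| := by rw [abs_sub_comm]; ring_nf
    linarith
  unfold nint at h1 ⊢; linarith

lemma half_far (a b : ℤ) (q : ℕ) (hq : 1 ≤ q) :
    1/(2*(q:ℝ)) ≤ nint ((2*(a:ℝ)+1)/(2*q) + (b:ℝ)) := by
  have hq0 : (0:ℝ) < q := by exact_mod_cast hq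
  set v : ℝ := (2*(a:ℝ)+1)/(2*q) + (b:ℝ) with hv
  set n : ℤ := round v
  have hodd : (2*a + 1 + 2*q*(b - n) : ℤ) ≠ 0 := by
    intro h
    have hO : Odd (2*a + 1 + 2*(q:ℤ)*(b - n)) := ⟨a + (q:ℤ)*(b-n), by ring⟩
    rw [h] at hO
    exact (Int.not_even_iff_odd.mpr hO) Even.zero
  have h1 : (1:ℝ) ≤ |((2*a + 1 + 2*(q:ℤ)*(b - n) : ℤ) : ℝ)| := by
    exact_mod_cast Int.one_le_abs hodd
  have hv' : v - (n:ℝ) = ((2*a + 1 + 2*(q:ℤ)*(b - n) : ℤ) : ℝ) / (2*q) := by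
    push_cast
    rw [hv]
    field_simp
    ring
  have : 1/(2*(q:ℝ)) ≤ |v - (n:ℝ)| := by
    rw [hv', abs_div, abs_of_pos (by positivity : (0:ℝ) < 2*(q:ℝ))]
    apply div_le_div_of_nonneg_right h1 (by positivity) |>.trans_eq rfl
  exact this.trans_eq rfl

theorem stmt_11 (α : ℝ) (hirr : Irrational α)
    (hnotbad : ∀ ε > (0 : ℝ), ∃ q : ℕ, 1 ≤ q ∧ (q : ℝ) * nint ((q : ℝ) * α) < ε) :
    ∀ C > (0 : ℝ), ∃ N : ℕ, 1 ≤ N ∧ ∃ x z : ℝ,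
      ∀ k : ℕ, k ≤ ⌊C * (N : ℝ)⌋₊ → 1 / (N : ℝ) < nint (x + (k : ℝ) * α - z) := by
  intro C hC
  obtain ⟨q, hq1, hqsmall⟩ := hnotbad (1/(4*(4*C+1))) (by positivity)
  have hq0 : (0:ℝ) < q := by exact_mod_cast hq1
  set p : ℤ := round ((q:ℝ) * α) with hp
  set β : ℝ := (q:ℝ) * α - p with hβ
  have hδ : nint ((q:ℝ)*α) = |β| := rfl
  have hβ0 : β ≠ 0 := by
    intro h
    have : (q:ℝ) * α = (p:ℝ) := by rw [hβ] at h; linarith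
    have hirrq : Irrational ((q:ℝ) * α) := by
      have : q ≠ 0 := by omega
      exact (hirr.natCast_mul this)
    exact hirrq ⟨(p:ℚ), by push_cast [this]; norm_num⟩
  have hδ0 : 0 < |β| := abs_pos.mpr hβ0
  have hδsmall : (q:ℝ) * |β| < 1/(4*(4*C+1)) := by rw [← hδ]; exact hqsmall
  refine ⟨4*q, by omega, 1/(2*(q:ℝ)), 0, ?_⟩
  intro k hk
  have hN : ((4*q : ℕ) : ℝ) = 4*(q:ℝ) := by push_cast; ring
  -- bounds on k
  have hkC : (k:ℝ) ≤ C * (4*(q:ℝ)) := by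
    have h1 : (k:ℝ) ≤ (⌊C * ((4*q : ℕ) : ℝ)⌋₊ : ℝ) := by exact_mod_cast hk
    have h2 : ((⌊C * ((4*q : ℕ) : ℝ)⌋₊ : ℕ) : ℝ) ≤ C * ((4*q : ℕ) : ℝ) :=
      Nat.floor_le (by positivity)
    have h3 := h1.trans h2
    rwa [hN] at h3
  set m : ℕ := k / q with hm
  set j : ℕ := k % q with hj
  have hkmj : q * m + j = k := Nat.div_add_mod k q
  have hjq : j < q := Nat.mod_lt k (by omega)
  have hmle : (m:ℝ) ≤ 4*C := by
    have h1 : (m:ℝ) ≤ (k:ℝ)/(q:ℝ) := by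
      rw [hm]
      exact_mod_cast Nat.cast_div_le
    have h2 : (k:ℝ)/(q:ℝ) ≤ 4*C := by
      rw [div_le_iff₀ hq0]; nlinarith
    linarith [h1.trans h2]
  have hjle : (j:ℝ)/(q:ℝ) ≤ 1 := by
    rw [div_le_one hq0]
    exact_mod_cast hjq.le
  -- algebraic identity
  have hiden : 1/(2*(q:ℝ)) + (k:ℝ) * α - 0 =
      ((2*((j:ℤ)*p)+1 : ℝ)/(2*(q:ℝ)) + ((m:ℤ)*p : ℝ)) + ((m:ℝ) + (j:ℝ)/(q:ℝ)) * β := by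
    have hk' : (k:ℝ) = (q:ℝ)*(m:ℝ) + (j:ℝ) := by exact_mod_cast congrArg (Nat.cast (R := ℝ)) hkmj.symm
    have hα : (q:ℝ) * α = (p:ℝ) + β := by rw [hβ]; ring
    have hα2 : α = ((p:ℝ) + β)/(q:ℝ) := by
      rw [eq_div_iff hq0.ne']
      linear_combination hα
    push_cast
    rw [hk', hα2]
    field_simp
    ring
  -- lower bound
  have hfar : 1/(2*(q:ℝ)) ≤ nint ((2*((j:ℤ)*p : ℤ)+1 : ℝ)/(2*(q:ℝ)) + (((m:ℤ)*p : ℤ) : ℝ)) := by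
    have := half_far ((j:ℤ)*p) ((m:ℤ)*p) q hq1
    convert this using 3 <;> push_cast <;> ring
  have hBbound : |((m:ℝ) + (j:ℝ)/(q:ℝ)) * β| ≤ (4*C+1) * |β| := by
    rw [abs_mul]
    have h1 : |(m:ℝ) + (j:ℝ)/(q:ℝ)| = (m:ℝ) + (j:ℝ)/(q:ℝ) := abs_of_nonneg (by positivity)
    rw [h1]
    nlinarith
  have hkey : (4*C+1) * |β| < 1/(4*(q:ℝ)) := by
    rw [lt_div_iff₀ (by positivity)]
    calc (4*C+1) * |β| * (4*(q:ℝ)) = 4*(4*C+1) * ((q:ℝ) * |β|) := by ring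
      _ < 4*(4*C+1) * (1/(4*(4*C+1))) := by
          apply mul_lt_mul_of_pos_left hδsmall (by positivity)
      _ = 1 := by field_simp
  have hmain : 1/(2*(q:ℝ)) - (4*C+1) * |β| ≤ nint (1/(2*(q:ℝ)) + (k:ℝ) * α - 0) := by
    rw [hiden]
    have := nint_add_ge ((2*((j:ℤ)*p)+1 : ℝ)/(2*(q:ℝ)) + ((m:ℤ)*p : ℝ))
      (((m:ℝ) + (j:ℝ)/(q:ℝ)) * β)
    have h2 : 1/(2*(q:ℝ)) - (4*C+1) * |β| ≤
        nint ((2*((j:ℤ)*p)+1 : ℝ)/(2*(q:ℝ)) + ((m:ℤ)*p : ℝ)) - |((m:ℝ) + (j:ℝ)/(q:ℝ)) * β| := by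
      have hf : 1/(2*(q:ℝ)) ≤ nint ((2*((j:ℤ)*p)+1 : ℝ)/(2*(q:ℝ)) + ((m:ℤ)*p : ℝ)) := by
        convert hfar using 3 <;> push_cast <;> ring
      linarith
    linarith
  rw [hN]
  have : 1/(4*(q:ℝ)) < 1/(2*(q:ℝ)) - (4*C+1) * |β| := by
    have h14 : 1/(2*(q:ℝ)) - 1/(4*(q:ℝ)) = 1/(4*(q:ℝ)) := by field_simp; ring
    linarith
  calc 1/(4*(q:ℝ)) < 1/(2*(q:ℝ)) - (4*C+1) * |β| := this
    _ ≤ _ := hmain
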